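/- For a ≠ b in ℝ, the reflected Eberlein convolution of the 1-dimensional spherical waves f_a(x) = e^{2πi a|x|} and f_b(x) = e^{2πi b|x|} vanishes: lim_{L→∞} (1/(2L)) ∫_{-L}^{L} e^{2πi a|y|} e^{-2πi b|y-x|} dy = 0 for every x ∈ ℝ. -/

import Mathlib

open MeasureTheory Filter Real

theorem spherical_wave_1d_cross_convolution_vanishes (a b : ℝ) (hab : a ≠ b) (x : ℝ) :
    Tendsto (fun L : ℝ =>
        ((1 / (2 * L) : ℝ) : ℂ) *
          ∫ y in (-L)..L,
            Complex.exp (2 * Real.pi * Complex.I * ((a * |y| : ℝ) : ℂ)) *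
              (starRingEnd ℂ)
                (Complex.exp (2 * Real.pi * Complex.I * ((b * |y - x| : ℝ) : ℂ))))
      atTop (nhds (0 : ℂ)) := by
  have hd : (a - b : ℝ) ≠ 0 := sub_ne_zero.2 hab
  set c : ℂ := 2 * Real.pi * Complex.I * ((a - b : ℝ) : ℂ) with hc
  have hcne : c ≠ 0 := by
    simp only [hc]
    exact mul_ne_zero (mul_ne_zero (mul_ne_zero two_ne_zero
      (Complex.ofReal_ne_zero.2 Real.pi_ne_zero)) Complex.I_ne_zero)
      (Complex.ofReal_ne_zero.2 hd)
  set f : ℝ → ℂ := fun y =>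
    Complex.exp (2 * Real.pi * Complex.I * ((a * |y| : ℝ) : ℂ)) *
      (starRingEnd ℂ) (Complex.exp (2 * Real.pi * Complex.I * ((b * |y - x| : ℝ) : ℂ))) with hf
  have hconj : ∀ r : ℝ, (starRingEnd ℂ) (Complex.exp (2 * Real.pi * Complex.I * (r : ℂ)))
      = Complex.exp (-(2 * Real.pi * Complex.I * (r : ℂ))) := by
    intro r
    rw [← Complex.exp_conj]
    congr 1
    simp only [map_mul, Complex.conj_ofReal, Complex.conj_I, map_ofNat]
    ring
  have hnorm1 : ∀ y : ℝ, ‖f y‖ = 1 := by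
    intro y
    rw [hf]
    rw [norm_mul, RingHomIsometric.norm_map]
    simp [Complex.norm_exp]
  have hexpc : ∀ (d : ℂ), d = c ∨ d = -c → ∀ t : ℝ, ‖Complex.exp (d * t)‖ = 1 := by
    rintro d (rfl | rfl) t <;>
      simp [hc, Complex.norm_exp, Complex.mul_re, Complex.mul_im]
  have hfc : Continuous f := by
    rw [hf]
    exact (by fun_prop : Continuous fun y : ℝ =>
        Complex.exp (2 * Real.pi * Complex.I * ((a * |y| : ℝ) : ℂ))).mul
      (Complex.continuous_conj.comp (by fun_prop))
  have hI : ∀ u v : ℝ, IntervalIntegrable f volume u v := fun u v =>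
    hfc.intervalIntegrable u v
  have tailbound : ∀ (d : ℂ), d = c ∨ d = -c → ∀ u v : ℝ,
      ‖∫ y in u..v, Complex.exp (d * y)‖ ≤ 2 / ‖c‖ := by
    intro d hd' u v
    have hdne : d ≠ 0 := by rcases hd' with rfl | rfl <;> simpa using hcne
    rw [integral_exp_mul_complex hdne]
    rw [norm_div]
    have hnd : ‖d‖ = ‖c‖ := by rcases hd' with rfl | rfl <;> simp
    rw [hnd]
    gcongr
    calc ‖Complex.exp (d * v) - Complex.exp (d * u)‖
        ≤ ‖Complex.exp (d * v)‖ + ‖Complex.exp (d * u)‖ := norm_sub_le _ _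
      _ = 2 := by rw [hexpc d hd' v, hexpc d hd' u]; norm_num
  have key : ∀ L : ℝ, |x| ≤ L → ‖∫ y in (-L)..L, f y‖ ≤ 2 * |x| + 4 / ‖c‖ := by
    intro L hL
    have hL' : -L ≤ -|x| := neg_le_neg hL
    rw [← intervalIntegral.integral_add_adjacent_intervals (hI (-L) (|x|)) (hI (|x|) L),
        ← intervalIntegral.integral_add_adjacent_intervals (hI (-L) (-|x|)) (hI (-|x|) (|x|))]
    have mid : ‖∫ y in (-|x|)..(|x|), f y‖ ≤ 2 * |x| := by
      have := intervalIntegral.norm_integral_le_of_norm_le_const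
        (fun y (_ : y ∈ Set.uIoc (-|x|) (|x|)) => (hnorm1 y).le)
      calc ‖∫ y in (-|x|)..(|x|), f y‖ ≤ 1 * |(|x|) - (-|x|)| := this
        _ = 2 * |x| := by rw [one_mul, sub_neg_eq_add, abs_of_nonneg (by positivity)]; ring
    have right : ‖∫ y in (|x|)..L, f y‖ ≤ 2 / ‖c‖ := by
      have heq : ∫ y in (|x|)..L, f y
          = Complex.exp (2 * Real.pi * Complex.I * ((b * x : ℝ) : ℂ)) *
            ∫ y in (|x|)..L, Complex.exp (c * y) := by
        rw [← intervalIntegral.integral_const_mul]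
        apply intervalIntegral.integral_congr
        intro y hy
        rw [Set.uIcc_of_le hL] at hy
        have hy1 : |x| ≤ y := hy.1
        have hy0 : (0:ℝ) ≤ y := le_trans (abs_nonneg x) hy1
        have hyx : x ≤ y := le_trans (le_abs_self x) hy1
        rw [hf]
        simp only
        rw [abs_of_nonneg hy0, abs_of_nonneg (sub_nonneg.2 hyx), hconj, ← Complex.exp_add,
          ← Complex.exp_add]
        congr 1
        rw [hc]
        push_cast
        ring
      rw [heq, norm_mul]
      have h1 : ‖Complex.exp (2 * Real.pi * Complex.I * ((b * x : ℝ) : ℂ))‖ = 1 := by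
        simp [Complex.norm_exp]
      rw [h1, one_mul]
      exact tailbound c (Or.inl rfl) _ _
    have left : ‖∫ y in (-L)..(-|x|), f y‖ ≤ 2 / ‖c‖ := by
      have heq : ∫ y in (-L)..(-|x|), f y
          = Complex.exp (-(2 * Real.pi * Complex.I * ((b * x : ℝ) : ℂ))) *
            ∫ y in (-L)..(-|x|), Complex.exp ((-c) * y) := by
        rw [← intervalIntegral.integral_const_mul]
        apply intervalIntegral.integral_congr
        intro y hy
        rw [Set.uIcc_of_le hL'] at hy
        have hy1 : y ≤ -|x| := hy.2
        have hy0 : y ≤ 0 := le_trans hy1 (neg_nonpos_of_nonneg (abs_nonneg x))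
        have hyx : y ≤ x := le_trans hy1 (neg_le_of_abs_le le_rfl)
        rw [hf]
        simp only
        rw [abs_of_nonpos hy0, abs_of_nonpos (sub_nonpos.2 hyx), hconj, ← Complex.exp_add,
          ← Complex.exp_add]
        congr 1
        rw [hc]
        push_cast
        ring
      rw [heq, norm_mul]
      have h1 : ‖Complex.exp (-(2 * Real.pi * Complex.I * ((b * x : ℝ) : ℂ)))‖ = 1 := by
        simp [Complex.norm_exp]
      rw [h1, one_mul]
      exact tailbound (-c) (Or.inr rfl) _ _
    calc ‖(∫ y in (-L)..(-|x|), f y) + (∫ y in (-|x|)..(|x|), f y) + ∫ y in (|x|)..L, f y‖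
        ≤ ‖(∫ y in (-L)..(-|x|), f y) + (∫ y in (-|x|)..(|x|), f y)‖ + ‖∫ y in (|x|)..L, f y‖ :=
          norm_add_le _ _
      _ ≤ (‖∫ y in (-L)..(-|x|), f y‖ + ‖∫ y in (-|x|)..(|x|), f y‖) + ‖∫ y in (|x|)..L, f y‖ := by
          gcongr; exact norm_add_le _ _
      _ ≤ (2 / ‖c‖ + 2 * |x|) + 2 / ‖c‖ := by gcongr
      _ = 2 * |x| + 4 / ‖c‖ := by ring
  set K : ℝ := 2 * |x| + 4 / ‖c‖ with hK
  have hK0 : 0 ≤ K := by positivity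
  apply squeeze_zero_norm' (a := fun L : ℝ => K * (1 / (2 * L)))
  · filter_upwards [eventually_ge_atTop (max |x| 1)] with L hL
    have hLx : |x| ≤ L := le_trans (le_max_left _ _) hL
    have hL1 : (1:ℝ) ≤ L := le_trans (le_max_right _ _) hL
    have hLpos : (0:ℝ) < L := lt_of_lt_of_le one_pos hL1
    rw [norm_mul, Complex.norm_real, Real.norm_eq_abs, abs_of_nonneg (by positivity)]
    rw [mul_comm K]
    exact mul_le_mul_of_nonneg_left (key L hLx) (by positivity)
  · have h2L : Tendsto (fun L : ℝ => 2 * L) atTop atTop :=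
      Tendsto.const_mul_atTop (two_pos : (0:ℝ) < 2) tendsto_id
    have h2 : Tendsto (fun L : ℝ => 1 / (2 * L)) atTop (nhds 0) :=
      tendsto_const_nhds.div_atTop h2L
    simpa using h2.const_mul K
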